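/- Let π be the group presented by ⟨g₁,…,g_a | r₁,…,r_b⟩, with presentation complex C₂ → C₁ → C₀ over ℤ[π] and derivation α: F → C₁ as above, and let γ: F → C₁ ⊗_ℤ C₁ be the unique map with γ(g_i) = 0 for all i and γ(uv) = γ(u) + u·γ(v) + α(u) ⊗ u·α(v). Then the ℤ[π]-module map Δ₀ determined by Δ₀(h⁰) = h⁰⊗h⁰, Δ₀(h¹_i) = h⁰⊗h¹_i + h¹_i⊗g_ih⁰, and Δ₀(h²_j) = h⁰⊗h²_j + h²_j⊗h⁰ − γ(r_j) is a chain map in degrees ≤ 2: ∂_⊗(Δ₀(h¹_i)) = Δ₀(∂₁h¹_i) and ∂_⊗(Δ₀(h²_j)) = Δ₀(∂₂h²_j) for all i, j (Trotter's diagonal chain approximation on the 2-skeleton, with the sign convention ∂_⊗(x⊗y) = x⊗∂y + (−1)^q ∂x⊗y). -/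

import Mathlib

open scoped TensorProduct

namespace stmt7

variable {π : Type*} [Group π]

/-- The action of `g ∈ π` on a left `ℤ[π]`-module, as a `ℤ`-linear map. -/
noncomputable def actL (M : Type*) [AddCommGroup M] [Module (MonoidAlgebra ℤ π) M]
    (g : π) : M →ₗ[ℤ] M :=
  (DistribMulAction.toAddMonoidHom M
    ((MonoidAlgebra.of ℤ π g) : MonoidAlgebra ℤ π)).toIntLinearMap

/-- The representation of `π` underlying a left `ℤ[π]`-module. -/
noncomputable def repOf (M : Type*) [AddCommGroup M] [Module (MonoidAlgebra ℤ π) M] :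
    Representation ℤ π M where
  toFun := actL M
  map_one' := by
    ext x
    change (MonoidAlgebra.of ℤ π 1 : MonoidAlgebra ℤ π) • x = x
    rw [map_one, one_smul]
  map_mul' g h := by
    ext x
    change (MonoidAlgebra.of ℤ π (g * h) : MonoidAlgebra ℤ π) • x
      = (MonoidAlgebra.of ℤ π g : MonoidAlgebra ℤ π)
        • (MonoidAlgebra.of ℤ π h : MonoidAlgebra ℤ π) • x
    rw [map_mul, mul_smul]

/-- The diagonal action of `x ∈ ℤ[π]` on `M ⊗_ℤ N` (`g·(m⊗n) = gm⊗gn`,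
extended `ℤ`-linearly), by which a `ℤ[π]`-module map into `M ⊗_ℤ N` is
determined by its values on basis elements. -/
noncomputable def diagT (M N : Type*) [AddCommGroup M] [Module (MonoidAlgebra ℤ π) M]
    [AddCommGroup N] [Module (MonoidAlgebra ℤ π) N] (x : MonoidAlgebra ℤ π) :
    (M ⊗[ℤ] N) →ₗ[ℤ] (M ⊗[ℤ] N) :=
  Representation.asAlgebraHom ((repOf M).tprod (repOf N)) x

variable (π)

/-- The image `gᵢ = ρ(gᵢ) ∈ ℤ[π]` of a generator. -/
noncomputable def giA {a : ℕ} (ρ : FreeGroup (Fin a) →* π) (i : Fin a) :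
    MonoidAlgebra ℤ π :=
  MonoidAlgebra.of ℤ π (ρ (FreeGroup.of i))

/-- `∂₁ : C₁ → C₀`, `h¹ᵢ ↦ (gᵢ-1)h⁰`, i.e. `x ↦ Σᵢ xᵢ(gᵢ-1)`. -/
noncomputable def d1L (a : ℕ) (ρ : FreeGroup (Fin a) →* π) :
    (Fin a → MonoidAlgebra ℤ π) →ₗ[ℤ] MonoidAlgebra ℤ π :=
  ∑ i : Fin a,
    (AddMonoidHom.mulRight (giA π ρ i - 1)).toIntLinearMap
      ∘ₗ (LinearMap.proj i : (Fin a → MonoidAlgebra ℤ π) →ₗ[ℤ] MonoidAlgebra ℤ π)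

/-- `∂₂ : C₂ → C₁`, `h²ⱼ ↦ α(rⱼ)`, i.e. `y ↦ Σⱼ yⱼ·α(rⱼ)`. -/
noncomputable def d2L (a b : ℕ) (ρ : FreeGroup (Fin a) →* π)
    (r : Fin b → FreeGroup (Fin a))
    (α : FreeGroup (Fin a) → (Fin a → MonoidAlgebra ℤ π)) :
    (Fin b → MonoidAlgebra ℤ π) →ₗ[ℤ] (Fin a → MonoidAlgebra ℤ π) :=
  ∑ j : Fin b,
    (LinearMap.toSpanSingleton (MonoidAlgebra ℤ π) (Fin a → MonoidAlgebra ℤ π)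
        (α (r j))).toAddMonoidHom.toIntLinearMap
      ∘ₗ (LinearMap.proj j : (Fin b → MonoidAlgebra ℤ π) →ₗ[ℤ] MonoidAlgebra ℤ π)

/-- `Δ₀` on `C₀`: the `ℤ[π]`-linear (for the diagonal action) extension of
`Δ₀(h⁰) = h⁰ ⊗ h⁰`. -/
noncomputable def D00 (x : MonoidAlgebra ℤ π) :
    MonoidAlgebra ℤ π ⊗[ℤ] MonoidAlgebra ℤ π :=
  diagT _ _ x ((1 : MonoidAlgebra ℤ π) ⊗ₜ[ℤ] (1 : MonoidAlgebra ℤ π))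

/-- The `C₀ ⊗ C₁`-component of `Δ₀` on `C₁`, extending `h⁰ ⊗ h¹ᵢ`. -/
noncomputable def D01 (a : ℕ) (ρ : FreeGroup (Fin a) →* π)
    (x : Fin a → MonoidAlgebra ℤ π) :
    MonoidAlgebra ℤ π ⊗[ℤ] (Fin a → MonoidAlgebra ℤ π) :=
  ∑ i : Fin a, diagT _ _ (x i)
    ((1 : MonoidAlgebra ℤ π) ⊗ₜ[ℤ] Pi.single i (1 : MonoidAlgebra ℤ π))

/-- The `C₁ ⊗ C₀`-component of `Δ₀` on `C₁`, extending `h¹ᵢ ⊗ gᵢh⁰`. -/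
noncomputable def D10 (a : ℕ) (ρ : FreeGroup (Fin a) →* π)
    (x : Fin a → MonoidAlgebra ℤ π) :
    (Fin a → MonoidAlgebra ℤ π) ⊗[ℤ] MonoidAlgebra ℤ π :=
  ∑ i : Fin a, diagT _ _ (x i)
    ((Pi.single i (1 : MonoidAlgebra ℤ π)) ⊗ₜ[ℤ] giA π ρ i)

/-- The `C₀ ⊗ C₂`-component of `Δ₀` on `C₂`, extending `h⁰ ⊗ h²ⱼ`. -/
noncomputable def D02 (a b : ℕ) (ρ : FreeGroup (Fin a) →* π)
    (y : Fin b → MonoidAlgebra ℤ π) :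
    MonoidAlgebra ℤ π ⊗[ℤ] (Fin b → MonoidAlgebra ℤ π) :=
  ∑ j : Fin b, diagT _ _ (y j)
    ((1 : MonoidAlgebra ℤ π) ⊗ₜ[ℤ] Pi.single j (1 : MonoidAlgebra ℤ π))

/-- The `C₁ ⊗ C₁`-component of `Δ₀` on `C₂`, extending `-γ(rⱼ)`. -/
noncomputable def D11 (a b : ℕ) (ρ : FreeGroup (Fin a) →* π)
    (r : Fin b → FreeGroup (Fin a))
    (γ : FreeGroup (Fin a) →
      (Fin a → MonoidAlgebra ℤ π) ⊗[ℤ] (Fin a → MonoidAlgebra ℤ π))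
    (y : Fin b → MonoidAlgebra ℤ π) :
    (Fin a → MonoidAlgebra ℤ π) ⊗[ℤ] (Fin a → MonoidAlgebra ℤ π) :=
  ∑ j : Fin b, diagT _ _ (y j) (-(γ (r j)))

/-- The `C₂ ⊗ C₀`-component of `Δ₀` on `C₂`, extending `h²ⱼ ⊗ h⁰`. -/
noncomputable def D20 (a b : ℕ) (ρ : FreeGroup (Fin a) →* π)
    (y : Fin b → MonoidAlgebra ℤ π) :
    (Fin b → MonoidAlgebra ℤ π) ⊗[ℤ] MonoidAlgebra ℤ π :=
  ∑ j : Fin b, diagT _ _ (y j)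
    ((Pi.single j (1 : MonoidAlgebra ℤ π)) ⊗ₜ[ℤ] (1 : MonoidAlgebra ℤ π))

end stmt7

section lemmas
open stmt7
variable {π : Type*} [Group π]
variable (M N : Type*) [AddCommGroup M] [Module (MonoidAlgebra ℤ π) M]
    [AddCommGroup N] [Module (MonoidAlgebra ℤ π) N]

theorem diagT_one' : diagT M N (1 : MonoidAlgebra ℤ π) = LinearMap.id := by
  simp only [diagT, map_one]; rfl

theorem diagT_zero' : diagT M N (0 : MonoidAlgebra ℤ π) = 0 := by
  simp [diagT]; rfl

theorem diagT_add' (x y : MonoidAlgebra ℤ π) :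
    diagT M N (x + y) = diagT M N x + diagT M N y := by
  simp [diagT]; rfl

theorem diagT_mul' (x y : MonoidAlgebra ℤ π) (z : M ⊗[ℤ] N) :
    diagT M N (x * y) z = diagT M N x (diagT M N y z) := by
  simp [diagT, map_mul]; rfl

theorem diagT_of_tmul (g : π) (m : M) (n : N) :
    diagT M N (MonoidAlgebra.of ℤ π g) (m ⊗ₜ[ℤ] n)
      = ((MonoidAlgebra.of ℤ π g : MonoidAlgebra ℤ π) • m) ⊗ₜ[ℤ]
        ((MonoidAlgebra.of ℤ π g : MonoidAlgebra ℤ π) • n) := by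
  simp only [diagT, Representation.asAlgebraHom_of, Representation.tprod_apply,
    TensorProduct.map_tmul]
  rfl

theorem diagT_of_inv (g : π) (z : M ⊗[ℤ] N) :
    diagT M N (MonoidAlgebra.of ℤ π g⁻¹) (diagT M N (MonoidAlgebra.of ℤ π g) z) = z := by
  rw [← diagT_mul', ← map_mul, inv_mul_cancel, map_one, diagT_one', LinearMap.id_apply]

variable (π) (a : ℕ) (ρ : FreeGroup (Fin a) →* π)

theorem d1L_apply (x : Fin a → MonoidAlgebra ℤ π) :
    d1L π a ρ x = ∑ i : Fin a, x i * (giA π ρ i - 1) := by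
  simp [d1L]

theorem d1L_single (i : Fin a) :
    d1L π a ρ (Pi.single i 1) = giA π ρ i - 1 := by
  rw [d1L_apply, Finset.sum_eq_single i]
  · simp
  · intro b _ hb; simp [Pi.single_apply, hb]
  · simp

theorem d1L_smul (c : MonoidAlgebra ℤ π) (x : Fin a → MonoidAlgebra ℤ π) :
    d1L π a ρ (c • x) = c * d1L π a ρ x := by
  simp [d1L_apply, Finset.mul_sum, mul_assoc]

end lemmas
section lemmas2
open stmt7
variable {π : Type*} [Group π]
variable (π) (a b : ℕ) (ρ : FreeGroup (Fin a) →* π) (r : Fin b → FreeGroup (Fin a))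
  (α : FreeGroup (Fin a) → (Fin a → MonoidAlgebra ℤ π))

theorem d2L_apply (y : Fin b → MonoidAlgebra ℤ π) :
    d2L π a b ρ r α y = ∑ j : Fin b, y j • α (r j) := by
  simp [d2L, LinearMap.toSpanSingleton]

theorem d2L_single (j : Fin b) :
    d2L π a b ρ r α (Pi.single j 1) = α (r j) := by
  rw [d2L_apply, Finset.sum_eq_single j]
  · simp
  · intro c _ hc; simp [Pi.single_apply, hc]
  · simp

theorem D01_add (x y : Fin a → MonoidAlgebra ℤ π) :
    D01 π a ρ (x + y) = D01 π a ρ x + D01 π a ρ y := by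
  simp [D01, diagT_add', Finset.sum_add_distrib]

theorem D01_neg (x : Fin a → MonoidAlgebra ℤ π) :
    D01 π a ρ (-x) = - D01 π a ρ x := by
  have := D01_add π a ρ x (-x)
  simp only [add_neg_cancel] at this
  have h0 : D01 π a ρ (0 : Fin a → MonoidAlgebra ℤ π) = 0 := by
    simp [D01, diagT_zero']
  rw [h0] at this
  exact (neg_eq_of_add_eq_zero_right this.symm).symm

theorem D01_single (i : Fin a) :
    D01 π a ρ (Pi.single i 1)
      = (1 : MonoidAlgebra ℤ π) ⊗ₜ[ℤ] Pi.single i (1 : MonoidAlgebra ℤ π) := by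
  rw [D01, Finset.sum_eq_single i]
  · rw [Pi.single_eq_same, diagT_one', LinearMap.id_apply]
  · intro c _ hc
    rw [Pi.single_eq_of_ne hc, diagT_zero', LinearMap.zero_apply]
  · intro h; exact absurd (Finset.mem_univ i) h

theorem D01_smul (g : π) (x : Fin a → MonoidAlgebra ℤ π) :
    D01 π a ρ ((MonoidAlgebra.of ℤ π g : MonoidAlgebra ℤ π) • x)
      = diagT _ _ (MonoidAlgebra.of ℤ π g) (D01 π a ρ x) := by
  rw [D01, D01, map_sum]
  refine Finset.sum_congr rfl fun i _ => ?_
  rw [Pi.smul_apply, smul_eq_mul, diagT_mul']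

end lemmas2
section lemmas3
open stmt7
variable {π : Type*} [Group π]

/-- Free-group induction with `FreeGroup.of` instead of `pure`. -/
theorem fgInd {β : Type*} {P : FreeGroup β → Prop} (h1 : P 1)
    (hp : ∀ i, P (FreeGroup.of i)) (hi : ∀ i, P (FreeGroup.of i) → P (FreeGroup.of i)⁻¹)
    (hm : ∀ u v, P u → P v → P (u * v)) : ∀ w, P w :=
  fun w => FreeGroup.induction_on w h1 hp hi hm

variable (π) {a : ℕ} (ρ : FreeGroup (Fin a) →* π)
  {α : FreeGroup (Fin a) → (Fin a → MonoidAlgebra ℤ π)}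

theorem alpha_one
    (hα : ∀ u v : FreeGroup (Fin a),
      α (u * v) = α u + (MonoidAlgebra.of ℤ π (ρ u)) • α v) : α 1 = 0 := by
  have h := hα 1 1
  rw [one_mul, map_one, map_one, one_smul] at h
  exact (left_eq_add.mp h)

theorem alpha_inv
    (hα : ∀ u v : FreeGroup (Fin a),
      α (u * v) = α u + (MonoidAlgebra.of ℤ π (ρ u)) • α v)
    (u : FreeGroup (Fin a)) :
    (MonoidAlgebra.of ℤ π (ρ u)) • α u⁻¹ = -α u := by
  have hg := hα u u⁻¹
  rw [mul_inv_cancel, alpha_one π ρ hα] at hg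
  rw [eq_neg_iff_add_eq_zero, add_comm]; exact hg.symm

theorem d1L_alpha
    (hα1 : ∀ i : Fin a, α (FreeGroup.of i) = Pi.single i 1)
    (hα : ∀ u v : FreeGroup (Fin a),
      α (u * v) = α u + (MonoidAlgebra.of ℤ π (ρ u)) • α v)
    (w : FreeGroup (Fin a)) :
    d1L π a ρ (α w) = MonoidAlgebra.of ℤ π (ρ w) - 1 := by
  induction w using fgInd with
  | h1 => rw [alpha_one π ρ hα, map_zero, map_one, map_one, sub_self]
  | hp i => rw [hα1, d1L_single, giA]
  | hi i h =>
    have h2 : MonoidAlgebra.of ℤ π (ρ (FreeGroup.of i)) * d1L π a ρ (α (FreeGroup.of i)⁻¹)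
        = -(MonoidAlgebra.of ℤ π (ρ (FreeGroup.of i)) - 1) := by
      rw [← d1L_smul, alpha_inv π ρ hα, map_neg, h]
    have h3 := congrArg
      (fun z => MonoidAlgebra.of ℤ π (ρ (FreeGroup.of i))⁻¹ * z) h2
    rw [← mul_assoc, ← map_mul, inv_mul_cancel, map_one, one_mul] at h3
    rw [map_inv, h3, mul_neg, mul_sub, ← map_mul, inv_mul_cancel, map_one, mul_one, neg_sub]
  | hm u v hu hv =>
    rw [hα, map_add, d1L_smul, hu, hv, map_mul, map_mul]
    noncomm_ring
end lemmas3
section lemmas4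
open stmt7
variable {π : Type*} [Group π]
variable (π) {a : ℕ} (ρ : FreeGroup (Fin a) →* π)

theorem D10_add (x y : Fin a → MonoidAlgebra ℤ π) :
    D10 π a ρ (x + y) = D10 π a ρ x + D10 π a ρ y := by
  simp [D10, diagT_add', Finset.sum_add_distrib]

theorem D10_neg (x : Fin a → MonoidAlgebra ℤ π) :
    D10 π a ρ (-x) = - D10 π a ρ x := by
  have h0 : D10 π a ρ (0 : Fin a → MonoidAlgebra ℤ π) = 0 := by
    simp [D10, diagT_zero']
  have := D10_add π ρ x (-x)
  rw [add_neg_cancel, h0] at this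
  exact (neg_eq_of_add_eq_zero_right this.symm).symm

theorem D10_single (i : Fin a) :
    D10 π a ρ (Pi.single i 1)
      = (Pi.single i (1 : MonoidAlgebra ℤ π)) ⊗ₜ[ℤ] giA π ρ i := by
  rw [D10, Finset.sum_eq_single i]
  · rw [Pi.single_eq_same, diagT_one', LinearMap.id_apply]
  · intro c _ hc
    rw [Pi.single_eq_of_ne hc, diagT_zero', LinearMap.zero_apply]
  · intro h; exact absurd (Finset.mem_univ i) h

theorem D10_smul (g : π) (x : Fin a → MonoidAlgebra ℤ π) :
    D10 π a ρ ((MonoidAlgebra.of ℤ π g : MonoidAlgebra ℤ π) • x)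
      = diagT _ _ (MonoidAlgebra.of ℤ π g) (D10 π a ρ x) := by
  rw [D10, D10, map_sum]
  refine Finset.sum_congr rfl fun i _ => ?_
  rw [Pi.smul_apply, smul_eq_mul, diagT_mul']

/-- equivariance of `d1 ⊗ id` for the diagonal action -/
theorem mapd1_diagT (g : π) :
    (TensorProduct.map (d1L π a ρ) (LinearMap.id (M := Fin a → MonoidAlgebra ℤ π)))
        ∘ₗ diagT _ _ (MonoidAlgebra.of ℤ π g)
      = diagT _ _ (MonoidAlgebra.of ℤ π g)
        ∘ₗ TensorProduct.map (d1L π a ρ) LinearMap.id := by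
  apply TensorProduct.ext'
  intro x y
  change TensorProduct.map _ _ (diagT _ _ _ (x ⊗ₜ[ℤ] y)) = diagT _ _ _ (TensorProduct.map _ _ (x ⊗ₜ[ℤ] y))
  simp only [LinearMap.comp_apply, diagT_of_tmul, TensorProduct.map_tmul, LinearMap.id_apply,
    d1L_smul, smul_eq_mul]

/-- equivariance of `id ⊗ d1` for the diagonal action -/
theorem mapid_d1_diagT (g : π) :
    (TensorProduct.map (LinearMap.id (M := Fin a → MonoidAlgebra ℤ π)) (d1L π a ρ))
        ∘ₗ diagT _ _ (MonoidAlgebra.of ℤ π g)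
      = diagT _ _ (MonoidAlgebra.of ℤ π g)
        ∘ₗ TensorProduct.map LinearMap.id (d1L π a ρ) := by
  apply TensorProduct.ext'
  intro x y
  change TensorProduct.map _ _ (diagT _ _ _ (x ⊗ₜ[ℤ] y)) = diagT _ _ _ (TensorProduct.map _ _ (x ⊗ₜ[ℤ] y))
  simp only [LinearMap.comp_apply, diagT_of_tmul, TensorProduct.map_tmul, LinearMap.id_apply,
    d1L_smul, smul_eq_mul]
end lemmas4
section lemmas5
open stmt7
variable {π : Type*} [Group π]
variable (π) {a : ℕ} (ρ : FreeGroup (Fin a) →* π)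
  {α : FreeGroup (Fin a) → (Fin a → MonoidAlgebra ℤ π)}
  {γ : FreeGroup (Fin a) →
      (Fin a → MonoidAlgebra ℤ π) ⊗[ℤ] (Fin a → MonoidAlgebra ℤ π)}

theorem gamma_one
    (hα : ∀ u v : FreeGroup (Fin a),
      α (u * v) = α u + (MonoidAlgebra.of ℤ π (ρ u)) • α v)
    (hγ : ∀ u v : FreeGroup (Fin a),
      γ (u * v) = γ u + stmt7.diagT _ _ (MonoidAlgebra.of ℤ π (ρ u)) (γ v)
        + (α u) ⊗ₜ[ℤ] ((MonoidAlgebra.of ℤ π (ρ u)) • α v)) : γ 1 = 0 := by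
  have h := hγ 1 1
  rw [one_mul, map_one, map_one, diagT_one', LinearMap.id_apply, alpha_one π ρ hα,
    TensorProduct.zero_tmul, add_zero] at h
  exact (left_eq_add.mp h)

theorem gamma_inv
    (hα : ∀ u v : FreeGroup (Fin a),
      α (u * v) = α u + (MonoidAlgebra.of ℤ π (ρ u)) • α v)
    (hγ : ∀ u v : FreeGroup (Fin a),
      γ (u * v) = γ u + stmt7.diagT _ _ (MonoidAlgebra.of ℤ π (ρ u)) (γ v)
        + (α u) ⊗ₜ[ℤ] ((MonoidAlgebra.of ℤ π (ρ u)) • α v))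
    (u : FreeGroup (Fin a)) :
    diagT _ _ (MonoidAlgebra.of ℤ π (ρ u)) (γ u⁻¹) = α u ⊗ₜ[ℤ] α u - γ u := by
  have h := hγ u u⁻¹
  rw [mul_inv_cancel, gamma_one π ρ hα hγ, alpha_inv π ρ hα, TensorProduct.tmul_neg] at h
  have h2 : γ u + diagT _ _ (MonoidAlgebra.of ℤ π (ρ u)) (γ u⁻¹) = α u ⊗ₜ[ℤ] α u := by
    exact add_neg_eq_zero.mp h.symm
  rw [eq_sub_iff_add_eq, add_comm]
  exact h2
end lemmas5
section lemmas6
open stmt7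
variable {π : Type*} [Group π]
variable (π) {a : ℕ} (ρ : FreeGroup (Fin a) →* π)
  {α : FreeGroup (Fin a) → (Fin a → MonoidAlgebra ℤ π)}
  {γ : FreeGroup (Fin a) →
      (Fin a → MonoidAlgebra ℤ π) ⊗[ℤ] (Fin a → MonoidAlgebra ℤ π)}

theorem lemA
    (hα1 : ∀ i : Fin a, α (FreeGroup.of i) = Pi.single i 1)
    (hα : ∀ u v : FreeGroup (Fin a),
      α (u * v) = α u + (MonoidAlgebra.of ℤ π (ρ u)) • α v)
    (hγ0 : ∀ i : Fin a, γ (FreeGroup.of i) = 0)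
    (hγ : ∀ u v : FreeGroup (Fin a),
      γ (u * v) = γ u + stmt7.diagT _ _ (MonoidAlgebra.of ℤ π (ρ u)) (γ v)
        + (α u) ⊗ₜ[ℤ] ((MonoidAlgebra.of ℤ π (ρ u)) • α v))
    (w : FreeGroup (Fin a)) :
    D01 π a ρ (α w) = (1 : MonoidAlgebra ℤ π) ⊗ₜ[ℤ] α w
      + TensorProduct.map (d1L π a ρ) LinearMap.id (γ w) := by
  induction w using fgInd with
  | h1 =>
    rw [alpha_one π ρ hα, gamma_one π ρ hα hγ, map_zero, TensorProduct.tmul_zero, add_zero]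
    simp [D01, diagT_zero']
  | hp i => rw [hα1, hγ0, map_zero, add_zero, D01_single]
  | hi i h =>
    set u := FreeGroup.of i with hu
    have hL : diagT _ _ (MonoidAlgebra.of ℤ π (ρ u)) (D01 π a ρ (α u⁻¹))
        = -((1 : MonoidAlgebra ℤ π) ⊗ₜ[ℤ] α u
            + TensorProduct.map (d1L π a ρ) LinearMap.id (γ u)) := by
      rw [← D01_smul, alpha_inv π ρ hα, D01_neg, h]
    have e1 := LinearMap.congr_fun (mapd1_diagT π ρ (ρ u)) (γ u⁻¹)
    change TensorProduct.map (d1L π a ρ) LinearMap.id (diagT _ _ (MonoidAlgebra.of ℤ π (ρ u)) (γ u⁻¹))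
      = diagT _ _ (MonoidAlgebra.of ℤ π (ρ u)) (TensorProduct.map (d1L π a ρ) LinearMap.id (γ u⁻¹)) at e1
    have hR : diagT _ _ (MonoidAlgebra.of ℤ π (ρ u))
          ((1 : MonoidAlgebra ℤ π) ⊗ₜ[ℤ] α u⁻¹
            + TensorProduct.map (d1L π a ρ) LinearMap.id (γ u⁻¹))
        = -((1 : MonoidAlgebra ℤ π) ⊗ₜ[ℤ] α u
            + TensorProduct.map (d1L π a ρ) LinearMap.id (γ u)) := by
      rw [map_add, diagT_of_tmul, smul_eq_mul, mul_one, alpha_inv π ρ hα,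
        TensorProduct.tmul_neg, ← e1, gamma_inv π ρ hα hγ, map_sub,
        TensorProduct.map_tmul, LinearMap.id_apply, d1L_alpha π ρ hα1 hα,
        TensorProduct.sub_tmul]
      abel
    have key := hL.trans hR.symm
    have h2 := congrArg
      (diagT _ _ (MonoidAlgebra.of ℤ π (ρ u)⁻¹)) key
    rw [diagT_of_inv, diagT_of_inv] at h2
    exact h2
  | hm u v hu hv =>
    have e1 := LinearMap.congr_fun (mapd1_diagT π ρ (ρ u)) (γ v)
    change TensorProduct.map (d1L π a ρ) LinearMap.id (diagT _ _ (MonoidAlgebra.of ℤ π (ρ u)) (γ v))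
      = diagT _ _ (MonoidAlgebra.of ℤ π (ρ u)) (TensorProduct.map (d1L π a ρ) LinearMap.id (γ v)) at e1
    rw [hα, hγ, D01_add, D01_smul, hu, hv, map_add, diagT_of_tmul, smul_eq_mul, mul_one,
      ← e1, TensorProduct.tmul_add, map_add, map_add, TensorProduct.map_tmul,
      LinearMap.id_apply, d1L_alpha π ρ hα1 hα, TensorProduct.sub_tmul]
    abel
end lemmas6
section lemmas7
open stmt7
variable {π : Type*} [Group π]
variable (π) {a : ℕ} (ρ : FreeGroup (Fin a) →* π)
  {α : FreeGroup (Fin a) → (Fin a → MonoidAlgebra ℤ π)}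
  {γ : FreeGroup (Fin a) →
      (Fin a → MonoidAlgebra ℤ π) ⊗[ℤ] (Fin a → MonoidAlgebra ℤ π)}

theorem lemB
    (hα1 : ∀ i : Fin a, α (FreeGroup.of i) = Pi.single i 1)
    (hα : ∀ u v : FreeGroup (Fin a),
      α (u * v) = α u + (MonoidAlgebra.of ℤ π (ρ u)) • α v)
    (hγ0 : ∀ i : Fin a, γ (FreeGroup.of i) = 0)
    (hγ : ∀ u v : FreeGroup (Fin a),
      γ (u * v) = γ u + stmt7.diagT _ _ (MonoidAlgebra.of ℤ π (ρ u)) (γ v)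
        + (α u) ⊗ₜ[ℤ] ((MonoidAlgebra.of ℤ π (ρ u)) • α v))
    (w : FreeGroup (Fin a)) :
    D10 π a ρ (α w) = α w ⊗ₜ[ℤ] (MonoidAlgebra.of ℤ π (ρ w) : MonoidAlgebra ℤ π)
      - TensorProduct.map LinearMap.id (d1L π a ρ) (γ w) := by
  induction w using fgInd with
  | h1 =>
    rw [alpha_one π ρ hα, gamma_one π ρ hα hγ, map_zero, TensorProduct.zero_tmul, sub_zero]
    simp [D10, diagT_zero']
  | hp i =>
    rw [hα1, hγ0, map_zero, sub_zero, D10_single, giA]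
  | hi i h =>
    set u := FreeGroup.of i with hu
    have hL : diagT _ _ (MonoidAlgebra.of ℤ π (ρ u)) (D10 π a ρ (α u⁻¹))
        = -(α u ⊗ₜ[ℤ] (MonoidAlgebra.of ℤ π (ρ u) : MonoidAlgebra ℤ π))
            + TensorProduct.map LinearMap.id (d1L π a ρ) (γ u) := by
      rw [← D10_smul, alpha_inv π ρ hα, D10_neg, h, neg_sub]
      abel
    have e1 := LinearMap.congr_fun (mapid_d1_diagT π ρ (ρ u)) (γ u⁻¹)
    change TensorProduct.map LinearMap.id (d1L π a ρ) (diagT _ _ (MonoidAlgebra.of ℤ π (ρ u)) (γ u⁻¹))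
      = diagT _ _ (MonoidAlgebra.of ℤ π (ρ u)) (TensorProduct.map LinearMap.id (d1L π a ρ) (γ u⁻¹)) at e1
    have hR : diagT _ _ (MonoidAlgebra.of ℤ π (ρ u))
          (α u⁻¹ ⊗ₜ[ℤ] (MonoidAlgebra.of ℤ π (ρ u⁻¹) : MonoidAlgebra ℤ π)
            - TensorProduct.map LinearMap.id (d1L π a ρ) (γ u⁻¹))
        = -(α u ⊗ₜ[ℤ] (MonoidAlgebra.of ℤ π (ρ u) : MonoidAlgebra ℤ π))
            + TensorProduct.map LinearMap.id (d1L π a ρ) (γ u) := by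
      rw [map_sub, diagT_of_tmul, alpha_inv π ρ hα, smul_eq_mul, ← map_mul,
        ← map_mul ρ, mul_inv_cancel, map_one, map_one, TensorProduct.neg_tmul, ← e1,
        gamma_inv π ρ hα hγ, map_sub, TensorProduct.map_tmul, LinearMap.id_apply,
        d1L_alpha π ρ hα1 hα, TensorProduct.tmul_sub]
      abel
    have key := hL.trans hR.symm
    have h2 := congrArg (diagT _ _ (MonoidAlgebra.of ℤ π (ρ u)⁻¹)) key
    rw [diagT_of_inv, diagT_of_inv] at h2
    exact h2
  | hm u v hu hv =>
    have e1 := LinearMap.congr_fun (mapid_d1_diagT π ρ (ρ u)) (γ v)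
    change TensorProduct.map LinearMap.id (d1L π a ρ) (diagT _ _ (MonoidAlgebra.of ℤ π (ρ u)) (γ v))
      = diagT _ _ (MonoidAlgebra.of ℤ π (ρ u)) (TensorProduct.map LinearMap.id (d1L π a ρ) (γ v)) at e1
    rw [hα, hγ, D10_add, D10_smul, hu, hv, map_sub, diagT_of_tmul, smul_eq_mul, ← map_mul,
      ← e1, map_mul ρ, map_mul (MonoidAlgebra.of ℤ π), TensorProduct.add_tmul,
      map_add, map_add, TensorProduct.map_tmul, LinearMap.id_apply, d1L_smul,
      d1L_alpha π ρ hα1 hα, mul_sub, mul_one, TensorProduct.tmul_sub]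
    abel
end lemmas7

section final
open stmt7
variable {π' : Type*} [Group π']
theorem diagT_sub' (M N : Type*) [AddCommGroup M] [Module (MonoidAlgebra ℤ π') M]
    [AddCommGroup N] [Module (MonoidAlgebra ℤ π') N] (x y : MonoidAlgebra ℤ π') :
    diagT M N (x - y) = diagT M N x - diagT M N y := by
  simp [diagT, map_sub]; rfl
end final


open stmt7 in
/-- Let `π` be the group presented by `⟨g₁,…,g_a | r₁,…,r_b⟩`
with presentation complex `C₂ → C₁ → C₀` over `ℤ[π]` (`C₀ = ℤ[π]h⁰`,
`C₁ = ⊕ᵢℤ[π]h¹ᵢ`, `C₂ = ⊕ⱼℤ[π]h²ⱼ`, `∂₁(h¹ᵢ) = (gᵢ-1)h⁰`, `∂₂(h²ⱼ) = α(rⱼ)`),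
`α : F → C₁` the unique derivation with `α(gᵢ) = h¹ᵢ`, and
`γ : F → C₁ ⊗_ℤ C₁` the unique map with `γ(gᵢ) = 0` and
`γ(uv) = γ(u) + u·γ(v) + α(u) ⊗ u·α(v)`.  Then the `ℤ[π]`-module map `Δ₀`
(for the diagonal action) determined by `Δ₀(h⁰) = h⁰⊗h⁰`,
`Δ₀(h¹ᵢ) = h⁰⊗h¹ᵢ + h¹ᵢ⊗gᵢh⁰`, `Δ₀(h²ⱼ) = h⁰⊗h²ⱼ + h²ⱼ⊗h⁰ - γ(rⱼ)` is a chain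
map in degrees ≤ 2:  `∂_⊗(Δ₀(h¹ᵢ)) = Δ₀(∂₁h¹ᵢ)` and `∂_⊗(Δ₀(h²ⱼ)) = Δ₀(∂₂h²ⱼ)`
for all `i, j`, with the sign convention `∂_⊗(x⊗y) = x⊗∂y + (-1)^q ∂x⊗y`
(`q = deg y`). -/
theorem stmt_7 (π : Type*) [Group π] (a b : ℕ)
    (ρ : FreeGroup (Fin a) →* π)
    (r : Fin b → FreeGroup (Fin a))
    (hsurj : Function.Surjective ρ)
    (hker : ρ.ker = Subgroup.normalClosure (Set.range r))
    (hrel : ∀ j : Fin b, ρ (r j) = 1)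
    (α : FreeGroup (Fin a) → (Fin a → MonoidAlgebra ℤ π))
    (hα1 : ∀ i : Fin a, α (FreeGroup.of i) = Pi.single i 1)
    (hα : ∀ u v : FreeGroup (Fin a),
      α (u * v) = α u + (MonoidAlgebra.of ℤ π (ρ u)) • α v)
    (γ : FreeGroup (Fin a) →
      (Fin a → MonoidAlgebra ℤ π) ⊗[ℤ] (Fin a → MonoidAlgebra ℤ π))
    (hγ0 : ∀ i : Fin a, γ (FreeGroup.of i) = 0)
    (hγ : ∀ u v : FreeGroup (Fin a),
      γ (u * v) = γ u + stmt7.diagT _ _ (MonoidAlgebra.of ℤ π (ρ u)) (γ v)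
        + (α u) ⊗ₜ[ℤ] ((MonoidAlgebra.of ℤ π (ρ u)) • α v)) :
    -- ∂_⊗(Δ₀(h¹ᵢ)) = Δ₀(∂₁h¹ᵢ):
    (∀ i : Fin a,
      TensorProduct.map LinearMap.id (stmt7.d1L π a ρ)
          ((1 : MonoidAlgebra ℤ π) ⊗ₜ[ℤ] Pi.single i (1 : MonoidAlgebra ℤ π))
        + TensorProduct.map (stmt7.d1L π a ρ) LinearMap.id
            ((Pi.single i (1 : MonoidAlgebra ℤ π)) ⊗ₜ[ℤ] stmt7.giA π ρ i)
      = stmt7.D00 π (stmt7.giA π ρ i - 1)) ∧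
    -- ∂_⊗(Δ₀(h²ⱼ)) = Δ₀(∂₂h²ⱼ), component in C₀ ⊗ C₁:
    (∀ j : Fin b,
      TensorProduct.map LinearMap.id (stmt7.d2L π a b ρ r α)
          ((1 : MonoidAlgebra ℤ π) ⊗ₜ[ℤ] Pi.single j (1 : MonoidAlgebra ℤ π))
        + (-1 : ℤ) • TensorProduct.map (stmt7.d1L π a ρ) LinearMap.id (-(γ (r j)))
      = stmt7.D01 π a ρ (α (r j))) ∧
    -- ∂_⊗(Δ₀(h²ⱼ)) = Δ₀(∂₂h²ⱼ), component in C₁ ⊗ C₀: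
    (∀ j : Fin b,
      TensorProduct.map LinearMap.id (stmt7.d1L π a ρ) (-(γ (r j)))
        + TensorProduct.map (stmt7.d2L π a b ρ r α) LinearMap.id
            ((Pi.single j (1 : MonoidAlgebra ℤ π)) ⊗ₜ[ℤ] (1 : MonoidAlgebra ℤ π))
      = stmt7.D10 π a ρ (α (r j))) := by
  refine ⟨fun i => ?_, fun j => ?_, fun j => ?_⟩
  · rw [TensorProduct.map_tmul, TensorProduct.map_tmul, LinearMap.id_apply, LinearMap.id_apply,
      d1L_single, D00, diagT_sub', LinearMap.sub_apply, diagT_one', LinearMap.id_apply,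
      giA, diagT_of_tmul, smul_eq_mul, mul_one, TensorProduct.tmul_sub, TensorProduct.sub_tmul]
    abel
  · rw [TensorProduct.map_tmul, LinearMap.id_apply, d2L_single, map_neg, smul_neg,
      neg_one_smul, neg_neg, lemA π ρ hα1 hα hγ0 hγ]
  · rw [map_neg, TensorProduct.map_tmul, LinearMap.id_apply, d2L_single,
      lemB π ρ hα1 hα hγ0 hγ, hrel j, map_one]
    abel
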